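/- The set S = {t ∈ (0,1) irrational : a_{i+1}(t) ≥ φ^{d_i(t)} for infinitely many i} has Lebesgue measure zero, where a_i(t) are the partial quotients and d_i(t) the convergent denominators of the continued fraction expansion of t, and φ = (1+√5)/2. -/

import Mathlib

noncomputable def phi : ℝ := (1 + Real.sqrt 5) / 2

/-- The Gauss map `x ↦ {1/x}`. -/
noncomputable def gaussMap (x : ℝ) : ℝ := Int.fract (1 / x)

/-- The `k`-th partial quotient `a_k(t)` (for `k ≥ 1`) of the regular continued
fraction of an irrational `t ∈ (0,1)`. -/
noncomputable def cfPQ (t : ℝ) (k : ℕ) : ℤ := ⌊1 / gaussMap^[k - 1] t⌋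

noncomputable def cfDenAux (t : ℝ) : ℕ → ℤ × ℤ
  | 0 => (1, cfPQ t 1)
  | n + 1 => ((cfDenAux t n).2, cfPQ t (n + 2) * (cfDenAux t n).2 + (cfDenAux t n).1)

/-- The denominator `d_n(t)` of the `n`-th convergent. -/
noncomputable def cfDen (t : ℝ) (n : ℕ) : ℤ := (cfDenAux t n).1

noncomputable def cfNumAux (t : ℝ) : ℕ → ℤ × ℤ
  | 0 => (0, 1)
  | n + 1 => ((cfNumAux t n).2, cfPQ t (n + 2) * (cfNumAux t n).2 + (cfNumAux t n).1)

/-- The numerator `c_n(t)` of the `n`-th convergent. -/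
noncomputable def cfNum (t : ℝ) (n : ℕ) : ℤ := (cfNumAux t n).1

open MeasureTheory


open MeasureTheory Set Filter

lemma phi_ge : (1.6:ℝ) ≤ phi := by
  have h : (2.2:ℝ) ≤ Real.sqrt 5 := by
    rw [show (2.2:ℝ) = Real.sqrt (2.2^2) by rw [Real.sqrt_sq]; norm_num]
    exact Real.sqrt_le_sqrt (by norm_num)
  unfold phi; linarith

lemma one_lt_phi : (1:ℝ) < phi := lt_of_lt_of_le (by norm_num) phi_ge
lemma phi_pos : (0:ℝ) < phi := lt_trans one_pos one_lt_phi

lemma gauss_step {t : ℝ} (ht : Irrational t) (h : t ∈ Set.Ioo (0:ℝ) 1) :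
    Irrational (gaussMap t) ∧ gaussMap t ∈ Set.Ioo (0:ℝ) 1 := by
  have hti : Irrational (1/t) := by
    rw [one_div]; exact ht.inv
  have hfi : Irrational (Int.fract (1/t)) := by
    unfold Int.fract; exact Irrational.sub_intCast hti _
  refine ⟨hfi, ?_, Int.fract_lt_one _⟩
  rcases lt_or_eq_of_le (Int.fract_nonneg (1/t)) with h' | h'
  · exact h'
  · exact absurd h'.symm (by simpa using hfi.ne_int 0)

lemma gauss_iter {t : ℝ} (ht : Irrational t) (h : t ∈ Set.Ioo (0:ℝ) 1) (i : ℕ) :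
    Irrational (gaussMap^[i] t) ∧ gaussMap^[i] t ∈ Set.Ioo (0:ℝ) 1 := by
  induction i with
  | zero => exact ⟨ht, h⟩
  | succ n ih =>
    rw [Function.iterate_succ_apply']
    exact gauss_step ih.1 ih.2

lemma pq_ge_one {t : ℝ} (ht : Irrational t) (h : t ∈ Set.Ioo (0:ℝ) 1) (k : ℕ) :
    1 ≤ cfPQ t k := by
  obtain ⟨hi, h0, h1⟩ := gauss_iter ht h (k - 1)
  rw [cfPQ, Int.le_floor]
  push_cast
  rw [le_div_iff₀ h0]
  linarith


lemma den_ge_fib {t : ℝ} (ht : Irrational t) (h : t ∈ Set.Ioo (0:ℝ) 1) (n : ℕ) :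
    ((Nat.fib (n+1) : ℤ) ≤ (cfDenAux t n).1) ∧ ((Nat.fib (n+2) : ℤ) ≤ (cfDenAux t n).2) := by
  induction n with
  | zero =>
    constructor
    · simp [cfDenAux]
    · simpa [cfDenAux] using pq_ge_one ht h 1
  | succ n ih =>
    obtain ⟨h1, h2⟩ := ih
    have ha := pq_ge_one ht h (n + 2)
    constructor
    · exact h2
    · show (Nat.fib (n+3) : ℤ) ≤ cfPQ t (n + 2) * (cfDenAux t n).2 + (cfDenAux t n).1
      have hfib : (Nat.fib (n+3) : ℤ) = Nat.fib (n+2) + Nat.fib (n+1) := by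
        rw [show n + 3 = (n+1) + 2 by ring, Nat.fib_add_two]
        push_cast; ring
      have hpos : (0:ℤ) ≤ (cfDenAux t n).2 := le_trans (by positivity) h2
      nlinarith [h1, h2, ha]


open scoped ENNReal

lemma lip_image (c : ℝ) (hc : 1 ≤ c) (s : Set ℝ) (hs : s ⊆ Set.Ici (0:ℝ)) :
    volume ((fun y => (y + c)⁻¹) '' s) ≤ ENNReal.ofReal (1/c^2) * volume s := by
  have hK : LipschitzOnWith (Real.toNNReal (1/c^2)) (fun y => (y + c)⁻¹) s := by
    apply LipschitzOnWith.of_dist_le_mul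
    intro x hx y hy
    have hx0 : 0 ≤ x := hs hx
    have hy0 : 0 ≤ y := hs hy
    have hxc : 0 < x + c := by linarith
    have hyc : 0 < y + c := by linarith
    rw [Real.dist_eq, Real.dist_eq, Real.coe_toNNReal _ (by positivity)]
    calc |(x+c)⁻¹ - (y+c)⁻¹| = |y - x| / ((x+c)*(y+c)) := by
            rw [inv_sub_inv hxc.ne' hyc.ne', abs_div, abs_of_pos (mul_pos hxc hyc)]
            ring_nf
      _ ≤ |y - x| / (c*c) := by
            gcongr <;> nlinarith [abs_nonneg (y-x)]
      _ = 1/c^2 * |x - y| := by rw [abs_sub_comm]; ring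
  calc volume ((fun y => (y + c)⁻¹) '' s) = μH[1] ((fun y => (y + c)⁻¹) '' s) := by
        rw [MeasureTheory.hausdorffMeasure_real]
    _ ≤ (Real.toNNReal (1/c^2) : ℝ≥0∞) ^ (1:ℝ) * μH[1] s :=
        hK.hausdorffMeasure_image_le zero_le_one
    _ = ENNReal.ofReal (1/c^2) * volume s := by
        rw [ENNReal.rpow_one, MeasureTheory.hausdorffMeasure_real]; rfl

lemma sum_range_bound (N : ℕ) :
    ∑ i ∈ Finset.range (N+1), (1:ℝ)/((i:ℝ)+1)^2 ≤ 2 - 1/((N:ℝ)+1) := by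
  induction N with
  | zero => norm_num
  | succ n ih =>
    rw [Finset.sum_range_succ]
    have h1 : (0:ℝ) < (n:ℝ)+1 := by positivity
    have key : (1:ℝ)/((n:ℝ)+1+1)^2 ≤ 1/((n:ℝ)+1) - 1/((n:ℝ)+1+1) := by
      rw [div_sub_div _ _ h1.ne' (by positivity : ((n:ℝ)+1+1) ≠ 0)]
      rw [div_le_div_iff₀ (by positivity) (by positivity)]
      nlinarith [sq_nonneg ((n:ℝ))]
    push_cast
    linarith

lemma tsum_bound : ∑' m : ℕ, ENNReal.ofReal ((1:ℝ)/((m:ℝ)+1)^2) ≤ 2 := by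
  have hsumm : Summable (fun m : ℕ => (1:ℝ)/((m:ℝ)+1)^2) := by
    have := (summable_nat_add_iff 1).mpr (Real.summable_one_div_nat_pow.mpr one_lt_two)
    simpa using this
  have htsum : ∑' m : ℕ, (1:ℝ)/((m:ℝ)+1)^2 ≤ 2 := by
    apply Summable.tsum_le_of_sum_range_le hsumm
    intro n
    match n with
    | 0 => simp
    | N+1 =>
      refine le_trans (sum_range_bound N) ?_
      have : (0:ℝ) < (N:ℝ)+1 := by positivity
      have : (0:ℝ) ≤ 1/((N:ℝ)+1) := by positivity
      linarith
  rw [← ENNReal.ofReal_tsum_of_nonneg (fun n => by positivity) hsumm]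
  calc ENNReal.ofReal (∑' m : ℕ, (1:ℝ)/((m:ℝ)+1)^2) ≤ ENNReal.ofReal 2 :=
        ENNReal.ofReal_le_ofReal htsum
    _ = 2 := by norm_num

lemma step_bound (A : Set ℝ) :
    volume {x ∈ Set.Ioo (0:ℝ) 1 | gaussMap x ∈ A} ≤ 2 * volume (A ∩ Set.Ico 0 1) := by
  set B := A ∩ Set.Ico (0:ℝ) 1 with hB
  have hBsub : B ⊆ Set.Ici (0:ℝ) := fun y hy => hy.2.1
  have hsub : {x ∈ Set.Ioo (0:ℝ) 1 | gaussMap x ∈ A} ⊆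
      ⋃ m : ℕ, (fun y => (y + ((m:ℝ)+1))⁻¹) '' B := by
    rintro x ⟨⟨hx0, hx1⟩, hxA⟩
    have hx1' : 1 < 1/x := by rw [lt_div_iff₀ hx0]; linarith
    set n : ℤ := ⌊1/x⌋ with hn
    have hn1 : 1 ≤ n := by rw [hn, Int.le_floor]; exact_mod_cast hx1'.le
    refine Set.mem_iUnion.mpr ⟨(n - 1).toNat, ?_⟩
    refine ⟨gaussMap x, ⟨hxA, Int.fract_nonneg _, Int.fract_lt_one _⟩, ?_⟩
    have hcast : (((n-1).toNat : ℕ) : ℝ) + 1 = (n : ℝ) := by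
      have h' : (((n-1).toNat : ℕ) : ℤ) = n - 1 := Int.toNat_of_nonneg (by omega)
      have : (((n-1).toNat : ℕ) : ℝ) = ((n : ℝ) - 1) := by exact_mod_cast congrArg (Int.cast : ℤ → ℝ) h'
      rw [this]; ring
    show (gaussMap x + ((((n-1).toNat : ℕ) : ℝ)+1))⁻¹ = x
    rw [hcast]
    have hg : gaussMap x + (n:ℝ) = 1/x := by
      simp only [gaussMap, Int.fract, hn]; ring
    rw [hg, one_div, inv_inv]
  calc volume {x ∈ Set.Ioo (0:ℝ) 1 | gaussMap x ∈ A}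
      ≤ ∑' m : ℕ, volume ((fun y => (y + ((m:ℝ)+1))⁻¹) '' B) :=
        (measure_mono hsub).trans (measure_iUnion_le _)
    _ ≤ ∑' m : ℕ, ENNReal.ofReal ((1:ℝ)/((m:ℝ)+1)^2) * volume B :=
        ENNReal.tsum_le_tsum fun m => lip_image ((m:ℝ)+1) (by norm_num) B hBsub
    _ = (∑' m : ℕ, ENNReal.ofReal ((1:ℝ)/((m:ℝ)+1)^2)) * volume B :=
        ENNReal.tsum_mul_right
    _ ≤ 2 * volume B := by
        gcongr
        exact tsum_bound

lemma iter_bound (i : ℕ) (A : Set ℝ) :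
    volume {x ∈ Set.Ioo (0:ℝ) 1 | gaussMap^[i] x ∈ A} ≤ 2^i * volume (A ∩ Set.Ico 0 1) := by
  induction i generalizing A with
  | zero =>
    simp only [Function.iterate_zero, id, pow_zero, one_mul]
    apply measure_mono
    rintro x ⟨hx, hA⟩
    exact ⟨hA, hx.1.le, hx.2⟩
  | succ n ih =>
    have heq : {x ∈ Set.Ioo (0:ℝ) 1 | gaussMap^[n+1] x ∈ A} =
        {x ∈ Set.Ioo (0:ℝ) 1 | gaussMap x ∈ (gaussMap^[n] ⁻¹' A)} := by
      ext x
      simp [Function.iterate_succ_apply, Set.mem_preimage]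
    rw [heq]
    refine (step_bound _).trans ?_
    have hsplit : (gaussMap^[n] ⁻¹' A) ∩ Set.Ico 0 1 ⊆
        {x ∈ Set.Ioo (0:ℝ) 1 | gaussMap^[n] x ∈ A} ∪ {0} := by
      rintro x ⟨hA, h0, h1⟩
      rcases eq_or_lt_of_le h0 with h | h
      · right; simp [← h]
      · left; exact ⟨⟨h, h1⟩, hA⟩
    calc 2 * volume ((gaussMap^[n] ⁻¹' A) ∩ Set.Ico 0 1)
        ≤ 2 * (volume {x ∈ Set.Ioo (0:ℝ) 1 | gaussMap^[n] x ∈ A} + volume {(0:ℝ)}) := by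
          gcongr
          exact (measure_mono hsplit).trans (measure_union_le _ _)
      _ = 2 * volume {x ∈ Set.Ioo (0:ℝ) 1 | gaussMap^[n] x ∈ A} := by
          rw [Real.volume_singleton, add_zero]
      _ ≤ 2 * (2^n * volume (A ∩ Set.Ico 0 1)) := by gcongr; exact ih A
      _ = 2^(n+1) * volume (A ∩ Set.Ico 0 1) := by ring

noncomputable def epsSeq (i : ℕ) : ℝ := phi ^ (-(Nat.fib (i+1) : ℤ))

lemma epsSeq_pos (i : ℕ) : 0 < epsSeq i := zpow_pos phi_pos _

lemma summable_g : Summable (fun i : ℕ => (2:ℝ)^i * epsSeq i) := by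
  apply summable_of_ratio_norm_eventually_le (r := 4/5) (by norm_num)
  filter_upwards [Filter.eventually_ge_atTop 3] with i hi
  have hfib2 : (2:ℕ) ≤ Nat.fib i := by
    calc (2:ℕ) = Nat.fib 3 := by decide
      _ ≤ Nat.fib i := Nat.fib_mono hi
  have hQpos : (0:ℝ) < phi ^ (-(Nat.fib i : ℤ)) := zpow_pos phi_pos _
  have hPpos : (0:ℝ) < epsSeq i := epsSeq_pos i
  have hQ : phi ^ (-(Nat.fib i : ℤ)) ≤ 2/5 := by
    have h1 : (5/2:ℝ) ≤ phi ^ (Nat.fib i) := by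
      calc (5/2:ℝ) ≤ (8/5:ℝ)^2 := by norm_num
        _ ≤ phi^2 := by gcongr; · norm_num; · linarith [phi_ge]
        _ ≤ phi ^ (Nat.fib i) := pow_le_pow_right₀ one_lt_phi.le hfib2
    have h2 : (phi ^ (Nat.fib i))⁻¹ ≤ (5/2:ℝ)⁻¹ := inv_anti₀ (by norm_num) h1
    rw [zpow_neg, zpow_natCast]
    calc (phi ^ (Nat.fib i))⁻¹ ≤ (5/2:ℝ)⁻¹ := h2
      _ = 2/5 := by norm_num
  have hsplit : epsSeq (i+1) = phi ^ (-(Nat.fib i : ℤ)) * epsSeq i := by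
    unfold epsSeq
    rw [← zpow_add₀ phi_pos.ne']
    congr 1
    have : Nat.fib (i+2) = Nat.fib i + Nat.fib (i+1) := Nat.fib_add_two
    rw [this]
    push_cast; ring
  rw [Real.norm_eq_abs, Real.norm_eq_abs,
    abs_of_pos (mul_pos (pow_pos two_pos _) (epsSeq_pos _)),
    abs_of_pos (mul_pos (pow_pos two_pos _) (epsSeq_pos _))]
  rw [hsplit, pow_succ]
  calc (2:ℝ)^i * 2 * (phi ^ (-(Nat.fib i : ℤ)) * epsSeq i)
      = (2 * phi ^ (-(Nat.fib i : ℤ))) * ((2:ℝ)^i * epsSeq i) := by ring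
    _ ≤ (4/5) * ((2:ℝ)^i * epsSeq i) := by
        apply mul_le_mul_of_nonneg_right _
          (mul_nonneg (by positivity) (epsSeq_pos i).le)
        linarith


/-- The set `S = {t ∈ (0,1) : a_{i+1}(t) ≥ φ^{d_i(t)} infinitely often}` has
Lebesgue measure zero. -/
theorem stmt7 :
    volume {t : ℝ | t ∈ Set.Ioo (0 : ℝ) 1 ∧ Irrational t ∧
      {i : ℕ | phi ^ (cfDen t i) ≤ (cfPQ t (i + 1) : ℝ)}.Infinite} = 0 := by
  set E : ℕ → Set ℝ :=
    fun i => {x ∈ Set.Ioo (0:ℝ) 1 | gaussMap^[i] x ∈ Set.Iic (epsSeq i)} with hE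
  have hsub : {t : ℝ | t ∈ Set.Ioo (0 : ℝ) 1 ∧ Irrational t ∧
      {i : ℕ | phi ^ (cfDen t i) ≤ (cfPQ t (i + 1) : ℝ)}.Infinite} ⊆ limsup E atTop := by
    rintro t ⟨htIoo, htIrr, hinf⟩
    rw [mem_limsup_iff_frequently_mem, Nat.frequently_atTop_iff_infinite]
    apply hinf.mono
    intro i hi
    simp only [Set.mem_setOf_eq] at hi
    obtain ⟨hxi, hx0, hx1⟩ := gauss_iter htIrr htIoo i
    have hpq : cfPQ t (i+1) = ⌊1 / gaussMap^[i] t⌋ := by simp [cfPQ]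
    have hfl : (cfPQ t (i+1) : ℝ) ≤ 1 / gaussMap^[i] t := by
      rw [hpq]; exact Int.floor_le _
    have hd : (Nat.fib (i+1) : ℤ) ≤ cfDen t i := (den_ge_fib htIrr htIoo i).1
    have hP : (0:ℝ) < phi ^ (cfDen t i) := zpow_pos phi_pos _
    have h1 : phi ^ (cfDen t i) ≤ 1 / gaussMap^[i] t := le_trans hi hfl
    rw [le_div_iff₀ hx0] at h1
    have h2 : gaussMap^[i] t ≤ (phi ^ (cfDen t i))⁻¹ := by
      rw [← one_div, le_div_iff₀ hP]
      linarith [mul_comm (phi ^ (cfDen t i)) (gaussMap^[i] t)]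
    refine ⟨htIoo, ?_⟩
    refine le_trans h2 ?_
    rw [← zpow_neg]
    exact zpow_le_zpow_right₀ one_lt_phi.le (by omega)
  have hEbound : ∀ i, volume (E i) ≤ ENNReal.ofReal ((2:ℝ)^i * epsSeq i) := by
    intro i
    refine le_trans (iter_bound i _) ?_
    have hss : Set.Iic (epsSeq i) ∩ Set.Ico (0:ℝ) 1 ⊆ Set.Icc 0 (epsSeq i) := by
      rintro x ⟨hx, h0, _⟩; exact ⟨h0, hx⟩
    calc 2^i * volume (Set.Iic (epsSeq i) ∩ Set.Ico (0:ℝ) 1)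
        ≤ 2^i * volume (Set.Icc (0:ℝ) (epsSeq i)) := by
          exact mul_le_mul_right (measure_mono hss) _
      _ = 2^i * ENNReal.ofReal (epsSeq i) := by rw [Real.volume_Icc, sub_zero]
      _ = ENNReal.ofReal ((2:ℝ)^i * epsSeq i) := by
          rw [ENNReal.ofReal_mul (by positivity), ENNReal.ofReal_pow (by norm_num)]
          norm_num
  have htsum : ∑' i, volume (E i) ≠ ⊤ := by
    apply ne_top_of_le_ne_top _ (ENNReal.tsum_le_tsum hEbound)
    rw [← ENNReal.ofReal_tsum_of_nonneg
      (fun i => mul_nonneg (by positivity) (epsSeq_pos i).le) summable_g]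
    exact ENNReal.ofReal_ne_top
  have h0 := measure_limsup_atTop_eq_zero htsum
  exact le_antisymm (le_trans (measure_mono hsub) h0.le) zero_le
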